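/- The centralizer of the polynomial multiplication operators in U_f consists exactly of the multiplication operators by elements of R: {u ∈ U_f : u ∘ m_p = m_p ∘ u for all p ∈ ℂ[x]} = {m_g : g ∈ R}, where R is the subring of ℂ(x) generated by ℂ[x] together with {1/(x+k) : k ∈ ℤ}. -/

import Mathlib

set_option maxHeartbeats 1000000
set_option synthInstance.maxHeartbeats 1000000


noncomputable section

/-- The polynomial ring `ℂ[x]`. -/
abbrev Pc : Type := Polynomial ℂ

/-- `L = ℂ(x)`, the field of rational functions in one variable. -/
abbrev L1 : Type := FractionRing Pc

/-- The variable `x` as an element of `L`. -/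
def x1 : L1 := algebraMap Pc L1 Polynomial.X

/-- The algebra automorphism of `ℂ[x]` with `x ↦ x − 1`. -/
def shift1 : Pc ≃ₐ[ℂ] Pc :=
  AlgEquiv.ofAlgHom
    (Polynomial.aeval (Polynomial.X - 1))
    (Polynomial.aeval (Polynomial.X + 1))
    (by apply Polynomial.algHom_ext; simp)
    (by apply Polynomial.algHom_ext; simp)

/-- The ℂ-algebra automorphism `δ` of `L = ℂ(x)` with `δ(x) = x − 1`. -/
def δ1 : L1 ≃ₐ[ℂ] L1 := IsFractionRing.algEquivOfAlgEquiv shift1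

/-- Multiplication by `a ∈ L` as a ℂ-linear endomorphism `m_a` of `L`. -/
def mul1 (a : L1) : Module.End ℂ L1 := LinearMap.mulLeft ℂ a

/-- The operator `X = δ ∘ m_{f(x)/x}`. -/
def Xop (f : Pc) : Module.End ℂ L1 :=
  δ1.toLinearMap * mul1 (algebraMap Pc L1 f / x1)

/-- The operator `Y = δ^{-1}`. -/
def Yop : Module.End ℂ L1 := δ1.symm.toLinearMap

/-- `U_f`, the unital ℂ-subalgebra of `End_ℂ(L)` generated by the polynomial
multiplication operators together with `X` and `Y`. -/
def Uf (f : Pc) : Subalgebra ℂ (Module.End ℂ L1) :=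
  Algebra.adjoin ℂ
    ({u | ∃ p : Pc, u = mul1 (algebraMap Pc L1 p)} ∪ {Xop f, Yop})

/-- `R`, the subring of `ℂ(x)` generated by `ℂ[x]` together with `{1/(x+k) : k ∈ ℤ}`. -/
def Rring : Subring L1 :=
  Subring.closure
    ({a | ∃ p : Pc, a = algebraMap Pc L1 p} ∪ {a | ∃ k : ℤ, a = 1 / (x1 + (k : L1))})

/-! ### basic lemmas -/

lemma mul1_apply (a b : L1) : mul1 a b = a * b := rfl
lemma mul1_mul (a b : L1) : mul1 (a * b) = mul1 a * mul1 b := by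
  ext c; simp [mul1_apply, Module.End.mul_apply, mul_assoc]
lemma mul1_add (a b : L1) : mul1 (a + b) = mul1 a + mul1 b := by
  ext c; simp [mul1_apply, add_mul]
lemma mul1_one : mul1 (1 : L1) = 1 := by ext c; simp [mul1_apply]
lemma mul1_zero : mul1 (0 : L1) = 0 := by ext c; simp [mul1_apply]
lemma mul1_sub (a b : L1) : mul1 (a - b) = mul1 a - mul1 b := by
  ext c; simp [mul1_apply, sub_mul]
lemma mul1_smul (c : ℂ) (a : L1) : mul1 (c • a) = c • mul1 a := by
  ext b; simp [mul1_apply, smul_mul_assoc]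
lemma mul1_pow (a : L1) (n : ℕ) : mul1 (a ^ n) = mul1 a ^ n := by
  induction n with
  | zero => simp [mul1_one]
  | succ n ih => rw [pow_succ, pow_succ, mul1_mul, ih]

lemma δ1_algebraMap (p : Pc) : δ1 (algebraMap Pc L1 p) = algebraMap Pc L1 (shift1 p) :=
  IsFractionRing.algEquivOfAlgEquiv_algebraMap shift1 p
lemma δ1_symm_algebraMap (p : Pc) :
    δ1.symm (algebraMap Pc L1 p) = algebraMap Pc L1 (shift1.symm p) := by
  rw [δ1, IsFractionRing.algEquivOfAlgEquiv_symm]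
  exact IsFractionRing.algEquivOfAlgEquiv_algebraMap shift1.symm p
lemma shift1_X : shift1 Polynomial.X = Polynomial.X - 1 := by simp [shift1]
lemma shift1_symm_X : shift1.symm Polynomial.X = Polynomial.X + 1 := by simp [shift1]
lemma δ1_x1 : δ1 x1 = x1 - 1 := by rw [x1, δ1_algebraMap, shift1_X, map_sub, map_one]
lemma δ1_symm_x1 : δ1.symm x1 = x1 + 1 := by
  rw [x1, δ1_symm_algebraMap, shift1_symm_X, map_add, map_one]

lemma conj_mul1 (σ : L1 ≃ₐ[ℂ] L1) (a : L1) :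
    σ.toLinearMap * mul1 a = mul1 (σ a) * σ.toLinearMap := by
  ext b; simp [Module.End.mul_apply, mul1_apply]

/-- powers of δ as endomorphisms -/
def E (k : ℤ) : Module.End ℂ L1 := ((δ1 ^ k : L1 ≃ₐ[ℂ] L1)).toLinearMap

lemma E_mul (j k : ℤ) : E (j + k) = E j * E k := by
  unfold E; rw [zpow_add]; ext b; simp [Module.End.mul_apply]
lemma E_zero : E 0 = 1 := by unfold E; rw [zpow_zero]; rfl
lemma E_one : E 1 = δ1.toLinearMap := by unfold E; rw [zpow_one]
lemma E_neg_one : E (-1) = δ1.symm.toLinearMap := by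
  unfold E; rw [zpow_neg_one]; rfl
lemma conj_E (k : ℤ) (a : L1) :
    E k * mul1 a = mul1 ((δ1 ^ k : L1 ≃ₐ[ℂ] L1) a) * E k := conj_mul1 _ a

lemma zpow_apply_x1 (k : ℤ) : (δ1 ^ k : L1 ≃ₐ[ℂ] L1) x1 = x1 - k := by
  induction k using Int.induction_on with
  | zero => simp
  | succ n ih =>
      have h1 : (δ1 ^ ((n : ℤ) + 1) : L1 ≃ₐ[ℂ] L1) x1 = δ1 ((δ1 ^ (n : ℤ) : L1 ≃ₐ[ℂ] L1) x1) := by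
        rw [add_comm, zpow_add, zpow_one, AlgEquiv.mul_apply]
      rw [h1, ih, map_sub, δ1_x1, map_intCast]
      push_cast; ring
  | pred n ih =>
      have h1 : (δ1 ^ (-(n : ℤ) - 1) : L1 ≃ₐ[ℂ] L1) x1 = δ1.symm ((δ1 ^ (-n : ℤ) : L1 ≃ₐ[ℂ] L1) x1) := by
        rw [sub_eq_add_neg, add_comm, zpow_add, zpow_neg_one, AlgEquiv.mul_apply]
        rfl
      rw [h1, ih, map_sub, δ1_symm_x1, map_intCast]
      push_cast; ring

/-! ### Rring lemmas -/

lemma R_poly (p : Pc) : algebraMap Pc L1 p ∈ Rring :=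
  Subring.subset_closure (Or.inl ⟨p, rfl⟩)

lemma R_inv (k : ℤ) : (1 : L1) / (x1 + (k : L1)) ∈ Rring :=
  Subring.subset_closure (Or.inr ⟨k, rfl⟩)

lemma R_smul (c : ℂ) {g : L1} (hg : g ∈ Rring) : c • g ∈ Rring := by
  have h1 : algebraMap ℂ L1 c ∈ Rring := by
    have : algebraMap ℂ L1 c = algebraMap Pc L1 (Polynomial.C c) := by
      rw [← Polynomial.algebraMap_eq, ← IsScalarTower.algebraMap_apply]
    rw [this]; exact R_poly _
  rw [Algebra.smul_def]
  exact Rring.mul_mem h1 hg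

lemma δ1_mem_R {g : L1} (hg : g ∈ Rring) : δ1 g ∈ Rring := by
  induction hg using Subring.closure_induction with
  | mem a ha =>
      rcases ha with ⟨p, rfl⟩ | ⟨k, rfl⟩
      · rw [δ1_algebraMap]; exact R_poly _
      · have : δ1 (1 / (x1 + (k : L1))) = 1 / (x1 + ((k - 1 : ℤ) : L1)) := by
          rw [map_div₀, map_one, map_add, δ1_x1, map_intCast]
          push_cast; ring_nf
        rw [this]; exact R_inv _
  | zero => simpa using Rring.zero_mem
  | one => simpa using Rring.one_mem
  | add a b _ _ ha hb => rw [map_add]; exact Rring.add_mem ha hb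
  | neg a _ ha => rw [map_neg]; exact Rring.neg_mem ha
  | mul a b _ _ ha hb => rw [map_mul]; exact Rring.mul_mem ha hb

lemma δ1_symm_mem_R {g : L1} (hg : g ∈ Rring) : δ1.symm g ∈ Rring := by
  induction hg using Subring.closure_induction with
  | mem a ha =>
      rcases ha with ⟨p, rfl⟩ | ⟨k, rfl⟩
      · rw [δ1_symm_algebraMap]; exact R_poly _
      · have : δ1.symm (1 / (x1 + (k : L1))) = 1 / (x1 + ((k + 1 : ℤ) : L1)) := by
          rw [map_div₀, map_one, map_add, δ1_symm_x1, map_intCast]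
          push_cast; ring_nf
        rw [this]; exact R_inv _
  | zero => simpa using Rring.zero_mem
  | one => simpa using Rring.one_mem
  | add a b _ _ ha hb => rw [map_add]; exact Rring.add_mem ha hb
  | neg a _ ha => rw [map_neg]; exact Rring.neg_mem ha
  | mul a b _ _ ha hb => rw [map_mul]; exact Rring.mul_mem ha hb

lemma zpow_mem_R (k : ℤ) {g : L1} (hg : g ∈ Rring) : (δ1 ^ k : L1 ≃ₐ[ℂ] L1) g ∈ Rring := by
  induction k using Int.induction_on with
  | zero => simpa using hg
  | succ n ih =>
      have h1 : (δ1 ^ ((n : ℤ) + 1) : L1 ≃ₐ[ℂ] L1) g = δ1 ((δ1 ^ (n : ℤ) : L1 ≃ₐ[ℂ] L1) g) := by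
        rw [add_comm, zpow_add, zpow_one, AlgEquiv.mul_apply]
      rw [h1]; exact δ1_mem_R ih
  | pred n ih =>
      have h1 : (δ1 ^ (-(n : ℤ) - 1) : L1 ≃ₐ[ℂ] L1) g = δ1.symm ((δ1 ^ (-n : ℤ) : L1 ≃ₐ[ℂ] L1) g) := by
        rw [sub_eq_add_neg, add_comm, zpow_add, zpow_neg_one, AlgEquiv.mul_apply]
        rfl
      rw [h1]; exact δ1_symm_mem_R ih

/-! ### the auxiliary algebra W -/

def Wset : Set (Module.End ℂ L1) := {u | ∃ g ∈ Rring, ∃ k : ℤ, u = mul1 g * E k}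

def Wmod : Submodule ℂ (Module.End ℂ L1) := Submodule.span ℂ Wset

lemma Wmod_one : (1 : Module.End ℂ L1) ∈ Wmod := by
  apply Submodule.subset_span
  exact ⟨1, Rring.one_mem, 0, by rw [mul1_one, E_zero, one_mul]⟩

lemma Wset_mul_mem {u v : Module.End ℂ L1} (hu : u ∈ Wset) (hv : v ∈ Wset) :
    u * v ∈ Wset := by
  obtain ⟨a, ha, j, rfl⟩ := hu
  obtain ⟨b, hb, k, rfl⟩ := hv
  refine ⟨a * (δ1 ^ j : L1 ≃ₐ[ℂ] L1) b, Rring.mul_mem ha (zpow_mem_R j hb), j + k, ?_⟩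
  rw [mul1_mul, E_mul]
  have : E j * mul1 b = mul1 ((δ1 ^ j : L1 ≃ₐ[ℂ] L1) b) * E j := conj_E j b
  calc mul1 a * E j * (mul1 b * E k)
      = mul1 a * (E j * mul1 b) * E k := by simp [mul_assoc]
    _ = mul1 a * (mul1 ((δ1 ^ j : L1 ≃ₐ[ℂ] L1) b) * E j) * E k := by rw [this]
    _ = mul1 a * mul1 ((δ1 ^ j : L1 ≃ₐ[ℂ] L1) b) * (E j * E k) := by simp [mul_assoc]

lemma Wmod_mul {u v : Module.End ℂ L1} (hu : u ∈ Wmod) (hv : v ∈ Wmod) :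
    u * v ∈ Wmod := by
  have h : Wmod * Wmod ≤ Wmod := by
    rw [Wmod, Submodule.span_mul_span]
    apply Submodule.span_le.2
    rintro w ⟨a, ha, b, hb, rfl⟩
    exact Submodule.subset_span (Wset_mul_mem ha hb)
  exact h (Submodule.mul_mem_mul hu hv)

def Wsub : Subalgebra ℂ (Module.End ℂ L1) :=
  Wmod.toSubalgebra Wmod_one (fun _ _ => Wmod_mul)

lemma Uf_le_Wsub (f : Pc) : Uf f ≤ Wsub := by
  apply Algebra.adjoin_le
  rintro u (⟨p, rfl⟩ | hu)
  · apply Submodule.subset_span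
    exact ⟨algebraMap Pc L1 p, R_poly p, 0, by rw [E_zero, mul_one]⟩
  · rcases hu with rfl | rfl
    · -- Xop
      apply Submodule.subset_span
      refine ⟨δ1 (algebraMap Pc L1 f / x1), ?_, 1, ?_⟩
      · rw [map_div₀, δ1_algebraMap, δ1_x1]
        have hx : x1 - 1 = x1 + ((-1 : ℤ) : L1) := by push_cast; ring
        rw [div_eq_mul_one_div, hx]
        exact Rring.mul_mem (R_poly _) (R_inv (-1))
      · rw [Xop, E_one, conj_mul1]
    · -- Yop
      apply Submodule.subset_span
      exact ⟨1, Rring.one_mem, -1, by rw [mul1_one, E_neg_one, one_mul, Yop]⟩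

/-! ### representation of elements of W -/

def mulL : L1 →ₗ[ℂ] Module.End ℂ L1 :=
  { toFun := mul1, map_add' := mul1_add, map_smul' := mul1_smul }

def Φ : (ℤ →₀ L1) →ₗ[ℂ] Module.End ℂ L1 :=
  Finsupp.lsum ℂ (fun k => (LinearMap.mulRight ℂ (E k)).comp mulL)

lemma Φ_apply (b : ℤ →₀ L1) : Φ b = b.sum (fun k g => mul1 g * E k) := rfl

def Mmod : Submodule ℂ (ℤ →₀ L1) where
  carrier := {b | ∀ k, b k ∈ Rring}
  add_mem' := by intro a b ha hb k; rw [Finsupp.add_apply]; exact Rring.add_mem (ha k) (hb k)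
  zero_mem' := by intro k; simpa using Rring.zero_mem
  smul_mem' := by intro c b hb k; rw [Finsupp.smul_apply]; exact R_smul c (hb k)

lemma Wmod_le_map : Wmod ≤ Submodule.map Φ Mmod := by
  apply Submodule.span_le.2
  rintro u ⟨g, hg, k, rfl⟩
  refine ⟨Finsupp.single k g, ?_, ?_⟩
  · intro j
    rw [Finsupp.single_apply]
    split
    · exact hg
    · exact Rring.zero_mem
  · rw [Φ_apply, Finsupp.sum_single_index (by rw [mul1_zero, zero_mul])]

instance : CharZero L1 :=
  charZero_of_injective_algebraMap (algebraMap ℂ L1).injective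

/-- the monoid homs δ^k -/
def χ (k : ℤ) : L1 →* L1 := ((δ1 ^ k : L1 ≃ₐ[ℂ] L1) : L1 →ₐ[ℂ] L1).toRingHom.toMonoidHom

lemma χ_apply (k : ℤ) (a : L1) : χ k a = (δ1 ^ k : L1 ≃ₐ[ℂ] L1) a := rfl

lemma χ_inj : Function.Injective χ := by
  intro j k h
  have h1 : (δ1 ^ j : L1 ≃ₐ[ℂ] L1) x1 = (δ1 ^ k : L1 ≃ₐ[ℂ] L1) x1 := by
    have := congrArg (fun φ : L1 →* L1 => φ x1) h
    simpa [χ_apply] using this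
  rw [zpow_apply_x1, zpow_apply_x1] at h1
  have h2 : (j : L1) = (k : L1) := by
    have := sub_right_injective h1
    exact this
  exact_mod_cast h2

lemma indep (s : Finset ℤ) (cc : ℤ → L1)
    (h : (∑ k ∈ s, mul1 (cc k) * E k) = 0) : ∀ k ∈ s, cc k = 0 := by
  have li : LinearIndependent L1 (fun k => ⇑(χ k)) :=
    (linearIndependent_monoidHom L1 L1).comp χ χ_inj
  have hfun : ∑ k ∈ s, cc k • ⇑(χ k) = (0 : L1 → L1) := by
    funext a
    have := congrArg (fun u : Module.End ℂ L1 => u a) h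
    simp only [LinearMap.sum_apply, LinearMap.zero_apply] at this
    have h2 : ∀ k, (mul1 (cc k) * E k) a = cc k * χ k a := fun k => rfl
    simp only [h2] at this
    simpa [Finset.sum_apply, Pi.smul_apply, smul_eq_mul] using this
  exact fun k hk => linearIndependent_iff'.1 li s cc hfun k hk

lemma forward (f : Pc) (u : Module.End ℂ L1) (hu : u ∈ Uf f)
    (hc : ∀ p : Pc, u * mul1 (algebraMap Pc L1 p) = mul1 (algebraMap Pc L1 p) * u) :
    ∃ g ∈ Rring, u = mul1 g := by
  have hw : u ∈ Wmod := Uf_le_Wsub f hu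
  obtain ⟨b, hb, rfl⟩ := Wmod_le_map hw
  have hcx : Φ b * mul1 x1 = mul1 x1 * Φ b := hc Polynomial.X
  have hsum : Φ b = ∑ k ∈ b.support, mul1 (b k) * E k := rfl
  have key : ∑ k ∈ b.support, mul1 ((-k : ℤ) • b k) * E k = 0 := by
    have expand : Φ b * mul1 x1 - mul1 x1 * Φ b
        = ∑ k ∈ b.support, mul1 ((-k : ℤ) • b k) * E k := by
      rw [hsum, Finset.sum_mul, Finset.mul_sum, ← Finset.sum_sub_distrib]
      apply Finset.sum_congr rfl
      intro k _
      have h1 : mul1 (b k) * E k * mul1 x1 = mul1 (b k * (x1 - (k : L1))) * E k := by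
        rw [mul_assoc, conj_E, zpow_apply_x1, mul1_mul, mul_assoc]
      have h2 : mul1 x1 * (mul1 (b k) * E k) = mul1 (x1 * b k) * E k := by
        rw [mul1_mul, mul_assoc]
      rw [h1, h2, ← sub_mul, ← mul1_sub]
      congr 1
      rw [zsmul_eq_mul]
      push_cast
      ring
    rw [← expand, hcx, sub_self]
  have hzero : ∀ k, k ≠ 0 → b k = 0 := by
    intro k hk
    by_cases hks : k ∈ b.support
    · have := indep b.support _ key k hks
      have hkL : ((-k : ℤ) : L1) ≠ 0 := by
        rw [Int.cast_ne_zero]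
        omega
      have : ((-k : ℤ) : L1) * b k = 0 := by rwa [zsmul_eq_mul] at this
      rcases mul_eq_zero.mp this with h | h
      · exact absurd h hkL
      · exact h
    · exact Finsupp.notMem_support_iff.mp hks
  have hb0 : b = Finsupp.single 0 (b 0) := by
    ext k
    by_cases hk : k = 0
    · subst hk; simp
    · rw [Finsupp.single_apply, if_neg (Ne.symm hk), hzero k hk]
  refine ⟨b 0, hb 0, ?_⟩
  conv_lhs => rw [hb0]
  rw [Φ_apply, Finsupp.sum_single_index (by rw [mul1_zero, zero_mul]), E_zero, mul_one]

/-! ### membership lemmas for Uf -/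

lemma mul1_neg (a : L1) : mul1 (-a) = -mul1 a := by ext c; simp [mul1_apply]

lemma Xop_mem (f : Pc) : Xop f ∈ Uf f :=
  Algebra.subset_adjoin (Or.inr (Set.mem_insert _ _))
lemma Yop_mem (f : Pc) : Yop ∈ Uf f :=
  Algebra.subset_adjoin (Or.inr (Set.mem_insert_of_mem _ rfl))
lemma mulpoly_mem (f p : Pc) : mul1 (algebraMap Pc L1 p) ∈ Uf f :=
  Algebra.subset_adjoin (Or.inl ⟨p, rfl⟩)

lemma symm_comp : δ1.symm.toLinearMap * δ1.toLinearMap = (1 : Module.End ℂ L1) := by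
  ext b; simp [Module.End.mul_apply]
lemma comp_symm : δ1.toLinearMap * δ1.symm.toLinearMap = (1 : Module.End ℂ L1) := by
  ext b; simp [Module.End.mul_apply]

lemma comp1 (f : Pc) {a : L1} (h : mul1 a ∈ Uf f) :
    mul1 (δ1.symm a * (algebraMap Pc L1 f / x1)) ∈ Uf f := by
  have hm : Yop * mul1 a * Xop f ∈ Uf f :=
    (Uf f).mul_mem ((Uf f).mul_mem (Yop_mem f) h) (Xop_mem f)
  have he : Yop * mul1 a * Xop f = mul1 (δ1.symm a * (algebraMap Pc L1 f / x1)) := by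
    rw [Yop, Xop, conj_mul1 δ1.symm a, mul1_mul]
    calc mul1 (δ1.symm a) * δ1.symm.toLinearMap * (δ1.toLinearMap * mul1 (algebraMap Pc L1 f / x1))
        = mul1 (δ1.symm a) * (δ1.symm.toLinearMap * δ1.toLinearMap) * mul1 (algebraMap Pc L1 f / x1) := by
          simp [mul_assoc]
      _ = mul1 (δ1.symm a) * mul1 (algebraMap Pc L1 f / x1) := by rw [symm_comp, mul_one]
  rwa [he] at hm

lemma comp2 (f : Pc) {a : L1} (h : mul1 a ∈ Uf f) :
    mul1 (δ1 (algebraMap Pc L1 f / x1 * a)) ∈ Uf f := by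
  have hm : Xop f * mul1 a * Yop ∈ Uf f :=
    (Uf f).mul_mem ((Uf f).mul_mem (Xop_mem f) h) (Yop_mem f)
  have he : Xop f * mul1 a * Yop = mul1 (δ1 (algebraMap Pc L1 f / x1 * a)) := by
    rw [Yop, Xop]
    calc δ1.toLinearMap * mul1 (algebraMap Pc L1 f / x1) * mul1 a * δ1.symm.toLinearMap
        = δ1.toLinearMap * mul1 (algebraMap Pc L1 f / x1 * a) * δ1.symm.toLinearMap := by
          rw [mul1_mul, mul_assoc δ1.toLinearMap]
      _ = mul1 (δ1 (algebraMap Pc L1 f / x1 * a)) * (δ1.toLinearMap * δ1.symm.toLinearMap) := by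
          rw [conj_mul1]; simp [mul_assoc]
      _ = mul1 (δ1 (algebraMap Pc L1 f / x1 * a)) := by rw [comp_symm, mul_one]
  rwa [he] at hm

lemma smul_extract (f : Pc) {c : ℂ} (hc : c ≠ 0) {a : L1} (h : mul1 (c • a) ∈ Uf f) :
    mul1 a ∈ Uf f := by
  rw [mul1_smul] at h
  have := (Uf f).smul_mem h c⁻¹
  rwa [smul_smul, inv_mul_cancel₀ hc, one_smul] at this

lemma algebraMap_C (c : ℂ) : algebraMap Pc L1 (Polynomial.C c) = algebraMap ℂ L1 c := by
  rw [← Polynomial.algebraMap_eq, ← IsScalarTower.algebraMap_apply]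

lemma cx_smul (c : ℂ) (a : L1) : algebraMap ℂ L1 c * a = c • a := (Algebra.smul_def c a).symm

lemma x1_sub_cx_ne (γ : ℂ) : x1 - algebraMap ℂ L1 γ ≠ 0 := by
  have h1 : x1 - algebraMap ℂ L1 γ
      = algebraMap Pc L1 (Polynomial.X - Polynomial.C γ) := by
    rw [map_sub, algebraMap_C, x1]
  rw [h1]
  intro h
  have := (IsFractionRing.injective Pc L1) (h.trans (map_zero _).symm)
  exact Polynomial.X_sub_C_ne_zero γ this

lemma cx_inj : Function.Injective (algebraMap ℂ L1) := (algebraMap ℂ L1).injective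

lemma key1 {K : Type*} [Field K] (x A c Q P : K) (hden : x - A ≠ 0)
    (hmap : c + (x - A) * Q = P) :
    P / (x - A) - Q = c * (1 / (x - A)) := by
  field_simp
  linear_combination -hmap

lemma key2 {K : Type*} [Field K] (x A B r1 r0 Q H : K) (hA : x - A ≠ 0) (hB : x - B ≠ 0)
    (hAB : A - B ≠ 0)
    (hmap : r1 * x + r0 + (x - A) * (x - B) * Q = H) :
    H / ((x - A) * (x - B)) - Q - ((r1 * A + r0) / (A - B)) * (1 / (x - A))
      = ((r1 * B + r0) / (B - A)) * (1 / (x - B)) := by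
  have hBA : B - A ≠ 0 := by intro h; apply hAB; linear_combination -h
  subst hmap
  field_simp
  ring

lemma base_ext (f : Pc) (γ : ℂ) (p : Pc) (hp : Polynomial.eval γ p ≠ 0)
    (h : mul1 (algebraMap Pc L1 p / (x1 - algebraMap ℂ L1 γ)) ∈ Uf f) :
    mul1 (1 / (x1 - algebraMap ℂ L1 γ)) ∈ Uf f := by
  set q := p /ₘ (Polynomial.X - Polynomial.C γ) with hq
  have hpoly : Polynomial.C (Polynomial.eval γ p)
      + (Polynomial.X - Polynomial.C γ) * q = p := by
    rw [hq, ← Polynomial.modByMonic_X_sub_C_eq_C_eval]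
    exact Polynomial.modByMonic_add_div p _
  have hmap : algebraMap ℂ L1 (Polynomial.eval γ p)
      + (x1 - algebraMap ℂ L1 γ) * algebraMap Pc L1 q = algebraMap Pc L1 p := by
    have := congrArg (algebraMap Pc L1) hpoly
    rw [map_add, map_mul, map_sub, algebraMap_C, algebraMap_C, ← x1] at this
    exact this
  have hden := x1_sub_cx_ne γ
  have key : algebraMap Pc L1 p / (x1 - algebraMap ℂ L1 γ) - algebraMap Pc L1 q
      = Polynomial.eval γ p • (1 / (x1 - algebraMap ℂ L1 γ)) := by
    rw [← cx_smul]
    exact key1 _ _ _ _ _ hden hmap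
  have hm : mul1 (algebraMap Pc L1 p / (x1 - algebraMap ℂ L1 γ) - algebraMap Pc L1 q) ∈ Uf f := by
    rw [mul1_sub]
    exact (Uf f).sub_mem h (mulpoly_mem f q)
  rw [key] at hm
  exact smul_extract f hp hm

set_option synthInstance.maxHeartbeats 1000000 in
set_option maxHeartbeats 1000000 in
lemma PF (f : Pc) (α β : ℂ) (hαβ : α ≠ β) (h : Pc) (hβ : Polynomial.eval β h ≠ 0)
    (hmem : mul1 (algebraMap Pc L1 h /
        ((x1 - algebraMap ℂ L1 α) * (x1 - algebraMap ℂ L1 β))) ∈ Uf f)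
    (hα : mul1 (1 / (x1 - algebraMap ℂ L1 α)) ∈ Uf f) :
    mul1 (1 / (x1 - algebraMap ℂ L1 β)) ∈ Uf f := by
  set d := (Polynomial.X - Polynomial.C α) * (Polynomial.X - Polynomial.C β) with hd
  have hdm : d.Monic := (Polynomial.monic_X_sub_C α).mul (Polynomial.monic_X_sub_C β)
  set q := h /ₘ d with hq
  set r := h %ₘ d with hr
  have hpoly : r + d * q = h := Polynomial.modByMonic_add_div h d
  have hdeg2 : d.degree = 2 := by
    rw [hd, Polynomial.degree_mul, Polynomial.degree_X_sub_C, Polynomial.degree_X_sub_C]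
    rfl
  have hrdeg : r.degree ≤ 1 := by
    have := Polynomial.degree_modByMonic_lt h hdm
    rw [hdeg2] at this
    rw [hr]
    exact Order.le_of_lt_succ (by exact_mod_cast this)
  have hrform : r = Polynomial.C (r.coeff 1) * Polynomial.X + Polynomial.C (r.coeff 0) :=
    Polynomial.eq_X_add_C_of_degree_le_one hrdeg
  set r1 := r.coeff 1
  set r0 := r.coeff 0
  have hrβ : r1 * β + r0 = Polynomial.eval β h := by
    have := congrArg (Polynomial.eval β) hpoly
    rw [Polynomial.eval_add, Polynomial.eval_mul, hd] at this
    simp only [Polynomial.eval_mul, Polynomial.eval_sub, Polynomial.eval_X,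
      Polynomial.eval_C, sub_self, mul_zero, zero_mul, add_zero] at this
    rw [← this]
    conv_lhs => rw [show r1 * β + r0 = Polynomial.eval β (Polynomial.C r1 * Polynomial.X + Polynomial.C r0) by simp]
    rw [← hrform]
  set c1 : ℂ := (r1 * α + r0) / (α - β) with hc1
  set c2 : ℂ := (r1 * β + r0) / (β - α) with hc2
  have hc2ne : c2 ≠ 0 := by
    rw [hc2, hrβ]
    exact div_ne_zero hβ (sub_ne_zero.mpr (Ne.symm hαβ))
  have hmap : algebraMap ℂ L1 r1 * x1 + algebraMap ℂ L1 r0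
      + (x1 - algebraMap ℂ L1 α) * (x1 - algebraMap ℂ L1 β) * algebraMap Pc L1 q
      = algebraMap Pc L1 h := by
    have h0 := hpoly
    rw [hrform, hd] at h0
    have := congrArg (algebraMap Pc L1) h0
    simp only [map_add, map_mul, map_sub, algebraMap_C] at this
    rw [← x1] at this
    linear_combination this
  have hA := x1_sub_cx_ne α
  have hB := x1_sub_cx_ne β
  have hABc : α - β ≠ 0 := sub_ne_zero.mpr hαβ
  have hAB : algebraMap ℂ L1 α - algebraMap ℂ L1 β ≠ 0 := by
    intro hcon
    apply hABc
    apply cx_inj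
    rw [map_sub, hcon, map_zero]
  have key : algebraMap Pc L1 h / ((x1 - algebraMap ℂ L1 α) * (x1 - algebraMap ℂ L1 β))
      - algebraMap Pc L1 q - c1 • (1 / (x1 - algebraMap ℂ L1 α))
      = c2 • (1 / (x1 - algebraMap ℂ L1 β)) := by
    rw [← cx_smul, ← cx_smul, hc1, hc2, map_div₀, map_div₀, map_add, map_add, map_mul,
      map_mul, map_sub, map_sub]
    exact key2 _ _ _ _ _ _ _ hA hB hAB hmap
  have hm : mul1 (algebraMap Pc L1 h / ((x1 - algebraMap ℂ L1 α) * (x1 - algebraMap ℂ L1 β))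
      - algebraMap Pc L1 q - c1 • (1 / (x1 - algebraMap ℂ L1 α))) ∈ Uf f := by
    rw [mul1_sub, mul1_sub, mul1_smul]
    exact (Uf f).sub_mem ((Uf f).sub_mem hmem (mulpoly_mem f q)) ((Uf f).smul_mem hα c1)
  rw [key] at hm
  exact smul_extract f hc2ne hm

lemma key3 {K : Type*} [Field K] (A B H : K) (m : ℕ) (hA : A ≠ 0) (hB : B ≠ 0) :
    (B ^ m * H) / A * (1 / B) ^ (m + 1) = H / (A * B) := by
  have hBm : B ^ m ≠ 0 := pow_ne_zero m hB
  rw [div_pow, one_pow, pow_succ]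
  field_simp

lemma key3' {K : Type*} [Field K] (B H x : K) (m : ℕ) (hx : x ≠ 0) (hB : B ≠ 0) :
    (1 / B) ^ (m + 1) * ((B ^ m * H) / x) = H / (x * B) := by
  have hBm : B ^ m ≠ 0 := pow_ne_zero m hB
  rw [div_pow, one_pow, pow_succ]
  field_simp

lemma δ1_symm_cx_inv (c : ℂ) :
    δ1.symm (1 / (x1 - algebraMap ℂ L1 c)) = 1 / (x1 - algebraMap ℂ L1 (c - 1)) := by
  rw [map_div₀, map_one, map_sub, δ1_symm_x1, AlgEquiv.commutes]
  congr 1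
  rw [map_sub, map_one]
  ring

lemma δ1_cx_inv (c : ℂ) :
    δ1 (1 / (x1 - algebraMap ℂ L1 c)) = 1 / (x1 - algebraMap ℂ L1 (c + 1)) := by
  rw [map_div₀, map_one, map_sub, δ1_x1, AlgEquiv.commutes]
  congr 1
  rw [map_add, map_one]
  ring

lemma x1_ne_zero : x1 ≠ 0 := by
  have := x1_sub_cx_ne 0
  rwa [map_zero, sub_zero] at this

lemma base0 (f : Pc) (hf : Polynomial.eval 0 f ≠ 0) :
    mul1 (1 / (x1 - algebraMap ℂ L1 0)) ∈ Uf f := by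
  have h1 : mul1 (1 : L1) ∈ Uf f := by rw [mul1_one]; exact (Uf f).one_mem
  have h2 := comp1 f h1
  rw [map_one, one_mul] at h2
  apply base_ext f 0 f hf
  rwa [map_zero, sub_zero]

lemma shift1_eval (f : Pc) : Polynomial.eval 1 (shift1 f) = Polynomial.eval 0 f := by
  have hcomp : shift1 f = f.comp (Polynomial.X - 1) := by
    rw [shift1]
    simp [Polynomial.aeval_def, Polynomial.comp, Polynomial.algebraMap_eq]
  rw [hcomp, Polynomial.eval_comp]
  norm_num

lemma base1 (f : Pc) (hf : Polynomial.eval 0 f ≠ 0) :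
    mul1 (1 / (x1 - algebraMap ℂ L1 1)) ∈ Uf f := by
  have h1 : mul1 (1 : L1) ∈ Uf f := by rw [mul1_one]; exact (Uf f).one_mem
  have h2 := comp2 f h1
  rw [mul_one, map_div₀, δ1_algebraMap, δ1_x1] at h2
  apply base_ext f 1 (shift1 f) (by rw [shift1_eval]; exact hf)
  rwa [map_one]

lemma stepPos (f : Pc) (hf : Polynomial.eval 0 f ≠ 0) (k : ℕ)
    (hk : mul1 (1 / (x1 - algebraMap ℂ L1 (-(k : ℂ)))) ∈ Uf f) :
    mul1 (1 / (x1 - algebraMap ℂ L1 (-(k : ℂ) - 1))) ∈ Uf f := by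
  have h0 := base0 f hf
  set β : ℂ := -(k : ℂ) - 1 with hβ
  have hfne : f ≠ 0 := fun h => hf (by simp [h])
  obtain ⟨h, hfh, hnd⟩ := f.exists_eq_pow_rootMultiplicity_mul_and_not_dvd hfne β
  set m := f.rootMultiplicity β with hm
  have hhβ : Polynomial.eval β h ≠ 0 := fun hev => hnd (Polynomial.dvd_iff_isRoot.mpr hev)
  have hpow : mul1 ((1 / (x1 - algebraMap ℂ L1 (-(k:ℂ)))) ^ (m+1)) ∈ Uf f := by
    rw [mul1_pow]; exact pow_mem hk _
  have hcomp := comp1 f hpow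
  have hs : δ1.symm ((1 / (x1 - algebraMap ℂ L1 (-(k:ℂ)))) ^ (m+1))
      = (1 / (x1 - algebraMap ℂ L1 β)) ^ (m+1) := by
    rw [map_pow, δ1_symm_cx_inv, ← hβ]
  rw [hs] at hcomp
  have hmapf : algebraMap Pc L1 f = (x1 - algebraMap ℂ L1 β) ^ m * algebraMap Pc L1 h := by
    conv_lhs => rw [hfh]
    rw [map_mul, map_pow, map_sub, algebraMap_C]
    rfl
  have hval : (1 / (x1 - algebraMap ℂ L1 β)) ^ (m+1) * (algebraMap Pc L1 f / x1)
      = algebraMap Pc L1 h / ((x1 - algebraMap ℂ L1 0) * (x1 - algebraMap ℂ L1 β)) := by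
    rw [hmapf, map_zero, sub_zero]
    exact key3' _ _ _ m x1_ne_zero (x1_sub_cx_ne β)
  rw [hval] at hcomp
  have hne : (0:ℂ) ≠ β := by
    rw [hβ]
    intro hcon
    have := Nat.cast_add_one_ne_zero (R := ℂ) k
    apply this
    push_cast
    linear_combination hcon
  exact PF f 0 β hne h hhβ hcomp h0

lemma stepNeg (f : Pc) (hf : Polynomial.eval 0 f ≠ 0) (k : ℕ)
    (hk : mul1 (1 / (x1 - algebraMap ℂ L1 ((k : ℂ) + 1))) ∈ Uf f) :
    mul1 (1 / (x1 - algebraMap ℂ L1 ((k : ℂ) + 2))) ∈ Uf f := by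
  have h1 := base1 f hf
  set β : ℂ := (k : ℂ) + 2 with hβ
  have hfne : f ≠ 0 := fun h => hf (by simp [h])
  set g := shift1 f with hg
  have hgne : g ≠ 0 := by
    intro hcon
    apply hfne
    have := congrArg shift1.symm hcon
    simpa [hg] using this
  obtain ⟨h, hgh, hnd⟩ := g.exists_eq_pow_rootMultiplicity_mul_and_not_dvd hgne β
  set m := g.rootMultiplicity β with hm
  have hhβ : Polynomial.eval β h ≠ 0 := fun hev => hnd (Polynomial.dvd_iff_isRoot.mpr hev)
  have hpow : mul1 ((1 / (x1 - algebraMap ℂ L1 ((k:ℂ) + 1))) ^ (m+1)) ∈ Uf f := by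
    rw [mul1_pow]; exact pow_mem hk _
  have hcomp := comp2 f hpow
  have hs : δ1 (algebraMap Pc L1 f / x1 * (1 / (x1 - algebraMap ℂ L1 ((k:ℂ) + 1))) ^ (m+1))
      = algebraMap Pc L1 g / (x1 - algebraMap ℂ L1 1) * (1 / (x1 - algebraMap ℂ L1 β)) ^ (m+1) := by
    rw [map_mul, map_div₀, δ1_algebraMap, δ1_x1, map_pow, δ1_cx_inv, ← hg,
      show (k:ℂ) + 1 + 1 = β by rw [hβ]; ring, map_one]
  rw [hs] at hcomp
  have hmapg : algebraMap Pc L1 g = (x1 - algebraMap ℂ L1 β) ^ m * algebraMap Pc L1 h := by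
    conv_lhs => rw [hgh]
    rw [map_mul, map_pow, map_sub, algebraMap_C]
    rfl
  have hval : algebraMap Pc L1 g / (x1 - algebraMap ℂ L1 1) * (1 / (x1 - algebraMap ℂ L1 β)) ^ (m+1)
      = algebraMap Pc L1 h / ((x1 - algebraMap ℂ L1 1) * (x1 - algebraMap ℂ L1 β)) := by
    rw [hmapg]
    exact key3 _ _ _ m (x1_sub_cx_ne 1) (x1_sub_cx_ne β)
  rw [hval] at hcomp
  have hne : (1:ℂ) ≠ β := by
    rw [hβ]
    intro hcon
    have := Nat.cast_add_one_ne_zero (R := ℂ) k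
    apply this
    push_cast
    linear_combination -hcon
  exact PF f 1 β hne h hhβ hcomp h1

lemma chainNeg (f : Pc) (hf : Polynomial.eval 0 f ≠ 0) (n : ℕ) :
    mul1 (1 / (x1 - algebraMap ℂ L1 (-(n : ℂ)))) ∈ Uf f := by
  induction n with
  | zero => simpa using base0 f hf
  | succ m ih =>
      have := stepPos f hf m ih
      have harg : -(m : ℂ) - 1 = -((m + 1 : ℕ) : ℂ) := by push_cast; ring
      rwa [harg] at this

lemma chainPos (f : Pc) (hf : Polynomial.eval 0 f ≠ 0) (n : ℕ) :
    mul1 (1 / (x1 - algebraMap ℂ L1 ((n : ℂ)))) ∈ Uf f := by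
  induction n with
  | zero => simpa using base0 f hf
  | succ m ih =>
      rcases m with _ | j
      · have := base1 f hf
        have harg : (1 : ℂ) = ((0 + 1 : ℕ) : ℂ) := by push_cast; ring
        rwa [harg] at this
      · have hkk : mul1 (1 / (x1 - algebraMap ℂ L1 ((j : ℂ) + 1))) ∈ Uf f := by
          have harg : ((j + 1 : ℕ) : ℂ) = (j : ℂ) + 1 := by push_cast; ring
          rwa [harg] at ih
        have := stepNeg f hf j hkk
        have harg : (j : ℂ) + 2 = ((j + 1 + 1 : ℕ) : ℂ) := by push_cast; ring
        rwa [harg] at this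

lemma R_to_U (f : Pc) (hf : Polynomial.eval 0 f ≠ 0) {g : L1} (hg : g ∈ Rring) :
    mul1 g ∈ Uf f := by
  induction hg using Subring.closure_induction with
  | mem a ha =>
      rcases ha with ⟨p, rfl⟩ | ⟨k, rfl⟩
      · exact mulpoly_mem f p
      · have hkey : (1 : L1) / (x1 + (k : L1)) = 1 / (x1 - algebraMap ℂ L1 (-(k : ℂ))) := by
          congr 1
          rw [map_neg, map_intCast]
          ring
        rw [hkey]
        rcases k.eq_nat_or_neg with ⟨n, rfl | rfl⟩
        · simp only [Int.cast_natCast]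
          exact chainNeg f hf n
        · simp only [Int.cast_neg, Int.cast_natCast, neg_neg]
          exact chainPos f hf n
  | zero => rw [mul1_zero]; exact (Uf f).zero_mem
  | one => rw [mul1_one]; exact (Uf f).one_mem
  | add a b _ _ ha hb => rw [mul1_add]; exact (Uf f).add_mem ha hb
  | neg a _ ha => rw [mul1_neg]; exact (Uf f).neg_mem ha
  | mul a b _ _ ha hb => rw [mul1_mul]; exact (Uf f).mul_mem ha hb

/-- the centralizer of the polynomial multiplication operators in `U_f` is
exactly `{m_g : g ∈ R}`. -/
theorem centralizer_of_polynomials_in_Uf (f : Pc) (hf : Polynomial.eval 0 f ≠ 0) :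
    {u : Module.End ℂ L1 | u ∈ Uf f ∧
        ∀ p : Pc, u * mul1 (algebraMap Pc L1 p) = mul1 (algebraMap Pc L1 p) * u} =
      {u | ∃ g ∈ Rring, u = mul1 g} := by
  ext u
  simp only [Set.mem_setOf_eq]
  constructor
  · rintro ⟨hu, hc⟩
    exact forward f u hu hc
  · rintro ⟨g, hg, rfl⟩
    refine ⟨R_to_U f hf hg, fun p => ?_⟩
    rw [← mul1_mul, ← mul1_mul, mul_comm]
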